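/- Define q(n) = Σ_λ (-1)^λ · C(n, ⌊(n-1+5λ)/2⌋) over all integers λ. Then q(n) = q(n-1) + q(n-2) for all n ≥ 2, with q(0) = 0 and q(1) = 1; consequently q(n) = F(n), the n-th Fibonacci number. -/
import Mathlib

/-- Binomial coefficient with integer arguments, zero out of range. -/
def C (n k : ℤ) : ℤ := if 0 ≤ k ∧ k ≤ n then (n.toNat.choose k.toNat : ℤ) else 0

lemma C_ne_zero {n k : ℤ} (h : C n k ≠ 0) : 0 ≤ k ∧ k ≤ n := by
  by_contra h'
  exact h (if_neg h')

lemma C_eq_zero {n k : ℤ} (h : ¬ (0 ≤ k ∧ k ≤ n)) : C n k = 0 := if_neg h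

lemma C_pascal (k : ℤ) {n : ℤ} (hn : 1 ≤ n) : C n k = C (n-1) k + C (n-1) (k-1) := by
  unfold C
  split_ifs with h1 h2 h3 h2 h3 h3 h3
  · -- all in range: 1 ≤ k ≤ n-1
    have hn' : n.toNat = (n-1).toNat + 1 := by omega
    have hk' : k.toNat = (k-1).toNat + 1 := by omega
    rw [hn', hk', Nat.choose_succ_succ]
    push_cast
    ring
  · -- k = 0
    have hk : k = 0 := by omega
    subst hk
    simp
  · -- k = n
    have hk : k = n := by omega
    subst hk
    rw [Nat.choose_self, Nat.choose_self]
    norm_num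
  all_goals omega

lemma eps_sub (l : ℤ) : (-1:ℤ)^(l-1).natAbs = -(-1:ℤ)^l.natAbs := by
  rcases Int.even_or_odd l with h | h
  · rw [Odd.neg_one_pow (Int.natAbs_odd.mpr (h.sub_odd odd_one)),
        Even.neg_one_pow (Int.natAbs_even.mpr h)]
  · rw [Even.neg_one_pow (Int.natAbs_even.mpr (h.sub_odd odd_one)),
        Odd.neg_one_pow (Int.natAbs_odd.mpr h)]
    norm_num

def T (n l : ℤ) : ℤ :=
  if (n - 1 + 5*l) % 2 = 0 then (-1:ℤ)^l.natAbs * C (n-2) ((n - 1 + 5*l)/2) else 0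

lemma key {n : ℤ} (hn : 2 ≤ n) (l : ℤ) :
    (-1:ℤ)^l.natAbs * C n ((n - 1 + 5*l).fdiv 2)
    = (-1:ℤ)^l.natAbs * C (n-1) ((n - 1 - 1 + 5*l).fdiv 2)
      + (-1:ℤ)^l.natAbs * C (n-2) ((n - 2 - 1 + 5*l).fdiv 2)
      + (T n l - T n (l-1)) := by
  rw [Int.fdiv_eq_ediv_of_nonneg _ (by norm_num), Int.fdiv_eq_ediv_of_nonneg _ (by norm_num),
      Int.fdiv_eq_ediv_of_nonneg _ (by norm_num)]
  unfold T
  have hn2 : n - 1 - 1 = n - 2 := by ring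
  rcases Int.emod_two_eq (n - 1 + 5*l) with hpar | hpar
  · -- even case: n - 1 + 5l = 2m
    set m := (n - 1 + 5*l) / 2 with hm
    have hx : n - 1 + 5*l = 2*m := by omega
    have e1 : (n - 1 - 1 + 5*l)/2 = m - 1 := by omega
    have e2 : (n - 2 - 1 + 5*l)/2 = m - 1 := by omega
    rw [if_pos hpar, if_neg (show ¬ ((n - 1 + 5*(l-1)) % 2 = 0) by omega), e1, e2]
    rw [C_pascal m (by omega : (1:ℤ) ≤ n), C_pascal m (by omega : (1:ℤ) ≤ n - 1), hn2]
    ring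
  · -- odd case: n - 1 + 5l = 2m + 1
    set m := (n - 1 + 5*l) / 2 with hm
    have hx : n - 1 + 5*l = 2*m + 1 := by omega
    have e1 : (n - 1 - 1 + 5*l)/2 = m := by omega
    have e2 : (n - 2 - 1 + 5*l)/2 = m - 1 := by omega
    have e3 : (n - 1 + 5*(l-1))/2 = m - 2 := by omega
    rw [if_neg (show ¬ ((n - 1 + 5*l) % 2 = 0) by omega),
        if_pos (show (n - 1 + 5*(l-1)) % 2 = 0 by omega), e1, e2, e3, eps_sub]
    rw [C_pascal m (by omega : (1:ℤ) ≤ n), C_pascal (m-1) (by omega : (1:ℤ) ≤ n - 1), hn2]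
    ring

/-- `q n = Σ_λ (-1)^λ C(n, ⌊(n-1+5λ)/2⌋)`, the sum over all integers `λ`. -/
noncomputable def q (n : ℤ) : ℤ :=
  ∑ᶠ l : ℤ, (-1 : ℤ) ^ l.natAbs * C n ((n - 1 + 5 * l).fdiv 2)

lemma supp_bound (n c : ℤ) {A B : ℤ} (hA : ∀ l : ℤ, 0 ≤ (c + 5*l)/2 → (c + 5*l)/2 ≤ n → A ≤ l ∧ l ≤ B) :
    Function.support (fun l : ℤ => (-1 : ℤ) ^ l.natAbs * C n ((c + 5 * l).fdiv 2))
      ⊆ ↑(Finset.Icc A B) := by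
  intro l hl
  simp only [Function.mem_support, ne_eq] at hl
  have hC : C n ((c + 5 * l).fdiv 2) ≠ 0 := by
    intro h
    exact hl (by rw [h, mul_zero])
  obtain ⟨h1, h2⟩ := C_ne_zero hC
  rw [Int.fdiv_eq_ediv_of_nonneg _ (by norm_num)] at h1 h2
  have := hA l h1 h2
  simp only [Finset.coe_Icc, Set.mem_Icc]
  exact this

lemma suppT (n : ℤ) (hn : 2 ≤ n) {A B : ℤ} (hAB : A ≤ -n - 3 ∧ n + 2 ≤ B) :
    Function.support (T n) ⊆ ↑(Finset.Icc A B) := by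
  intro l hl
  simp only [Function.mem_support, ne_eq, T] at hl
  simp only [Finset.coe_Icc, Set.mem_Icc]
  split_ifs at hl with hp
  · have hC : C (n-2) ((n - 1 + 5*l)/2) ≠ 0 := by
      intro h
      exact hl (by rw [h, mul_zero])
    obtain ⟨h1, h2⟩ := C_ne_zero hC
    omega
  · exact absurd rfl hl

lemma q_rec {n : ℤ} (hn : 2 ≤ n) : q n = q (n - 1) + q (n - 2) := by
  set A : ℤ := -n - 4 with hA
  set B : ℤ := n + 3 with hB
  have h0 : q n = ∑ l ∈ Finset.Icc A B, (-1 : ℤ) ^ l.natAbs * C n ((n - 1 + 5 * l).fdiv 2) :=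
    finsum_eq_finset_sum_of_support_subset _ (supp_bound n (n-1) (fun l u v => by omega))
  have h1 : q (n-1) = ∑ l ∈ Finset.Icc A B,
      (-1 : ℤ) ^ l.natAbs * C (n-1) ((n - 1 - 1 + 5 * l).fdiv 2) :=
    finsum_eq_finset_sum_of_support_subset _ (supp_bound (n-1) (n-1-1) (fun l u v => by omega))
  have h2 : q (n-2) = ∑ l ∈ Finset.Icc A B,
      (-1 : ℤ) ^ l.natAbs * C (n-2) ((n - 2 - 1 + 5 * l).fdiv 2) :=
    finsum_eq_finset_sum_of_support_subset _ (supp_bound (n-2) (n-2-1) (fun l u v => by omega))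
  have hT : ∑ l ∈ Finset.Icc A B, (T n l - T n (l-1)) = 0 := by
    rw [Finset.sum_sub_distrib]
    have e1 : ∑ l ∈ Finset.Icc A B, T n l = ∑ᶠ l, T n l :=
      (finsum_eq_finset_sum_of_support_subset _ (suppT n hn ⟨by omega, by omega⟩)).symm
    have e2 : ∑ l ∈ Finset.Icc A B, T n (l-1) = ∑ l ∈ Finset.Icc (A-1) (B-1), T n l := by
      refine Finset.sum_nbij' (fun l => l - 1) (fun l => l + 1) ?_ ?_ ?_ ?_ ?_
      · intro a ha; simp only [Finset.mem_Icc] at *; omega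
      · intro a ha; simp only [Finset.mem_Icc] at *; omega
      · intro a _; ring
      · intro a _; ring
      · intro a _; rfl
    have e3 : ∑ l ∈ Finset.Icc (A-1) (B-1), T n l = ∑ᶠ l, T n l :=
      (finsum_eq_finset_sum_of_support_subset _ (suppT n hn ⟨by omega, by omega⟩)).symm
    rw [e1, e2, e3, sub_self]
  rw [h0, h1, h2]
  calc ∑ l ∈ Finset.Icc A B, (-1 : ℤ) ^ l.natAbs * C n ((n - 1 + 5 * l).fdiv 2)
      = ∑ l ∈ Finset.Icc A B, ((-1 : ℤ) ^ l.natAbs * C (n-1) ((n - 1 - 1 + 5 * l).fdiv 2)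
          + (-1 : ℤ) ^ l.natAbs * C (n-2) ((n - 2 - 1 + 5 * l).fdiv 2)
          + (T n l - T n (l-1))) := Finset.sum_congr rfl (fun l _ => key hn l)
    _ = _ := by
        rw [Finset.sum_add_distrib, Finset.sum_add_distrib, hT, add_zero]

lemma q_zero : q 0 = 0 := by
  apply finsum_eq_zero_of_forall_eq_zero
  intro l
  have : C 0 ((0 - 1 + 5 * l).fdiv 2) = 0 := by
    apply C_eq_zero
    rw [Int.fdiv_eq_ediv_of_nonneg _ (by norm_num)]
    omega
  rw [this, mul_zero]

lemma q_one : q 1 = 1 := by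
  unfold q
  rw [finsum_eq_single _ 0]
  · norm_num
    decide
  · intro l hl
    have : C 1 ((1 - 1 + 5 * l).fdiv 2) = 0 := by
      apply C_eq_zero
      rw [Int.fdiv_eq_ediv_of_nonneg _ (by norm_num)]
      omega
    rw [this, mul_zero]

lemma q_fib_nat : ∀ N : ℕ, q (N : ℤ) = (Nat.fib N : ℤ) := by
  intro N
  induction N using Nat.strong_induction_on with
  | _ N ih =>
    match N with
    | 0 => simpa using q_zero
    | 1 => simpa using q_one
    | (k+2) =>
      have hr := q_rec (n := ((k:ℤ) + 2)) (by omega)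
      have c1 : ((k:ℤ) + 2) - 1 = ((k+1 : ℕ) : ℤ) := by push_cast; ring
      have c2 : ((k:ℤ) + 2) - 2 = ((k : ℕ) : ℤ) := by ring
      rw [c1, c2, ih (k+1) (by omega), ih k (by omega)] at hr
      have : ((k:ℤ) + 2) = ((k + 2 : ℕ) : ℤ) := by push_cast; ring
      rw [this] at hr
      rw [hr, Nat.fib_add_two]
      push_cast
      ring

theorem gs2_amateur :
    (∀ n : ℤ, 2 ≤ n → q n = q (n - 1) + q (n - 2)) ∧ q 0 = 0 ∧ q 1 = 1 ∧
      ∀ n : ℤ, 0 ≤ n → q n = (Nat.fib n.toNat : ℤ) := by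
  refine ⟨fun n hn => q_rec hn, q_zero, q_one, fun n hn => ?_⟩
  have : n = ((n.toNat : ℕ) : ℤ) := (Int.toNat_of_nonneg hn).symm
  rw [this, q_fib_nat, Int.toNat_natCast]
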